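/- Assume σ22 > 0 and let A ⊆ ℝ × [v,∞) be a Borel set for some v > 0 (so that c := ν̂(A) < ∞). Define G^A_0(x) = G_0(x) − ∫_A (exp(−x·u2) − 1) ν̂(du) for x ≥ 0. Then: (i) G^A_0 is convex on [0,∞) with G^A_0(0) = 0, the function x ↦ G^A_0(x) − c is convex with value −c ≤ 0 at 0, and it satisfies Grey's condition (there exists θ > 0 with G^A_0(θ) − c > 0 and ∫_θ^∞ dx/(G^A_0(x) − c) < ∞); (ii) the minimal continuous nonincreasing solution ψ̄ : (0,∞) → (0,∞) of ψ̄(t) − ψ̄(s) = ∫_s^t (c − G^A_0(ψ̄(w))) dw for 0 < s ≤ t with ψ̄(t) → ∞ as t → 0+ exists and satisfies lim_{t→∞} ψ̄(t) = inf{x ≥ 0 : G^A_0(x) > c}. -/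

import Mathlib

open MeasureTheory Real Filter Set Topology


theorem ode_package (F : ℝ → ℝ) (z θ' : ℝ) (hz : 0 ≤ z) (hzθ : z < θ')
    (hcont : ContinuousOn F (Ici 0))
    (hconv : ConvexOn ℝ (Ici 0) F)
    (hFz : F z = 0)
    (hFpos : ∀ x : ℝ, z < x → 0 < F x)
    (hFint : IntegrableOn (fun x => 1 / F x) (Ici θ')) :
    ∃ ψ : ℝ → ℝ,
      ContinuousOn ψ (Ioi 0) ∧ AntitoneOn ψ (Ioi 0) ∧ (∀ t : ℝ, 0 < t → z < ψ t) ∧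
      (∀ s t : ℝ, 0 < s → s ≤ t → ψ t - ψ s = ∫ w in s..t, -F (ψ w)) ∧
      Tendsto ψ (nhdsWithin 0 (Ioi 0)) atTop ∧ Tendsto ψ atTop (nhds z) ∧
      (∀ w : ℝ → ℝ, ContinuousOn w (Ioi 0) → (∀ t : ℝ, 0 < t → 0 ≤ w t) →
        (∀ s t : ℝ, 0 < s → s ≤ t → w t - w s = ∫ x in s..t, -F (w x)) →
        Tendsto w (nhdsWithin 0 (Ioi 0)) atTop → ∀ t : ℝ, 0 < t → ψ t ≤ w t) := by
  -- continuity facts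
  have hFat : ∀ x : ℝ, z < x → ContinuousAt F x := fun x hx =>
    hcont.continuousAt (Ici_mem_nhds (lt_of_le_of_lt hz hx))
  have hIat : ∀ x : ℝ, z < x → ContinuousAt (fun y => 1 / F y) x := fun x hx =>
    continuousAt_const.div (hFat x hx) (ne_of_gt (hFpos x hx))
  have hIOn : ContinuousOn (fun y => 1 / F y) (Ioi z) := fun x hx =>
    (hIat x hx).continuousWithinAt
  have hImeas : ∀ x : ℝ, z < x → StronglyMeasurableAtFilter (fun y => 1 / F y) (𝓝 x) volume :=
    hIOn.stronglyMeasurableAtFilter isOpen_Ioi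
  -- integrability of 1/F on Ioi x
  have hIF : ∀ x : ℝ, z < x → IntegrableOn (fun y => 1 / F y) (Ioi x) := by
    intro x hx
    have h1 : IntegrableOn (fun y => 1 / F y) (Icc x θ') := by
      apply (hIOn.mono _).integrableOn_compact isCompact_Icc
      intro y hy; exact lt_of_lt_of_le hx hy.1
    have h2 : Ioi x ⊆ Icc x θ' ∪ Ici θ' := by
      intro y hy
      rcases le_total y θ' with h | h
      · exact Or.inl ⟨le_of_lt hy, h⟩
      · exact Or.inr h
    exact (h1.union hFint).mono_set h2
  set Φ : ℝ → ℝ := fun x => ∫ y in Ioi x, 1 / F y with hΦdef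
  have hΦnn : ∀ x : ℝ, z ≤ x → 0 ≤ Φ x := by
    intro x hx
    apply setIntegral_nonneg measurableSet_Ioi
    intro y hy
    exact le_of_lt (one_div_pos.2 (hFpos y (lt_of_le_of_lt hx hy)))
  have hΦeq : ∀ a b : ℝ, z < a → a ≤ b → Φ a = (∫ y in a..b, 1 / F y) + Φ b := by
    intro a b ha hab
    rw [intervalIntegral.integral_of_le hab, hΦdef]
    have hsplit : Ioi a = Ioc a b ∪ Ioi b := (Ioc_union_Ioi_eq_Ioi hab).symm
    simp only
    rw [hsplit, setIntegral_union (Ioc_disjoint_Ioi le_rfl) measurableSet_Ioi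
      ((hIF a ha).mono_set Ioc_subset_Ioi_self)
      ((hIF a ha).mono_set (Ioi_subset_Ioi hab))]
  have hIcont : ∀ a b : ℝ, z < a → ContinuousOn (fun y => 1 / F y) (uIcc a b) → True := fun _ _ _ _ => trivial
  have hIint : ∀ a b : ℝ, z < a → z < b → IntervalIntegrable (fun y => 1 / F y) volume a b := by
    intro a b ha hb
    apply ContinuousOn.intervalIntegrable
    apply hIOn.mono
    rw [uIcc_eq_union]
    rintro y hy
    rcases hy with h | h
    · exact lt_of_lt_of_le ha h.1
    · exact lt_of_lt_of_le hb h.1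
  have hΦstrict : ∀ a b : ℝ, z < a → a < b → Φ b < Φ a := by
    intro a b ha hab
    have hpos := intervalIntegral.intervalIntegral_pos_of_pos_on
      (hIint a b ha (ha.trans hab))
      (fun x hx => one_div_pos.2 (hFpos x (ha.trans hx.1))) hab
    have := hΦeq a b ha hab.le
    linarith
  have hΦanti : ∀ a b : ℝ, z < a → a ≤ b → Φ b ≤ Φ a := by
    intro a b ha hab
    rcases eq_or_lt_of_le hab with rfl | h
    · exact le_rfl
    · exact (hΦstrict a b ha h).le
  have hΦderiv : ∀ x : ℝ, z < x → HasDerivAt Φ (-(1 / F x)) x := by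
    intro x hx
    set a : ℝ := (z + x) / 2 with hadef
    have ha : z < a := by simp only [hadef]; linarith
    have hax : a < x := by simp only [hadef]; linarith
    have heq : Φ =ᶠ[𝓝 x] fun y => Φ a - ∫ t in a..y, 1 / F t := by
      filter_upwards [Ioi_mem_nhds hax] with y hy
      have := hΦeq a y ha (le_of_lt hy)
      linarith
    have hd : HasDerivAt (fun y => Φ a - ∫ t in a..y, 1 / F t) (-(1 / F x)) x := by
      exact ((intervalIntegral.integral_hasDerivAt_right (hIint a x ha hx)
        (hImeas x hx) (hIat x hx)).const_sub (Φ a))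
    exact hd.congr_of_eventuallyEq heq
  have hΦcontAt : ∀ x : ℝ, z < x → ContinuousAt Φ x := fun x hx => (hΦderiv x hx).continuousAt
  -- Φ tends to 0 at infinity
  have hΦ0 : Tendsto Φ atTop (𝓝 0) := by
    have h1 : Tendsto (fun x => ∫ y in θ'..x, 1 / F y) atTop (𝓝 (Φ θ')) :=
      MeasureTheory.intervalIntegral_tendsto_integral_Ioi θ' (hIF θ' hzθ) tendsto_id
    have h2 : Tendsto (fun x => Φ θ' - ∫ y in θ'..x, 1 / F y) atTop (𝓝 (Φ θ' - Φ θ')) :=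
      tendsto_const_nhds.sub h1
    rw [sub_self] at h2
    apply h2.congr'
    filter_upwards [eventually_ge_atTop θ'] with x hx
    have := hΦeq θ' x hzθ hx
    linarith
  -- Φ tends to infinity at z from the right
  have hΦtop : Tendsto Φ (𝓝[>] z) atTop := by
    have hFθ : 0 < F θ' := hFpos θ' hzθ
    set K : ℝ := (θ' - z) / F θ' with hKdef
    have hK : 0 < K := div_pos (by linarith) hFθ
    have key : ∀ x ∈ Ioo z θ', K * Real.log ((θ' - z) / (x - z)) ≤ Φ x := by
      intro x hx
      obtain ⟨hxz, hxθ⟩ := hx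
      -- pointwise bound
      have hpt : ∀ y ∈ Icc x θ', K * (y - z)⁻¹ ≤ 1 / F y := by
        intro y hy
        have hyz : z < y := lt_of_lt_of_le hxz hy.1
        have hyθ : y ≤ θ' := hy.2
        set l : ℝ := (y - z) / (θ' - z) with hldef
        have hl0 : 0 < l := div_pos (by linarith) (by linarith)
        have hl1 : l ≤ 1 := by
          rw [hldef, div_le_one (by linarith)]; linarith
        have hcomb : (1 - l) • z + l • θ' = y := by
          have hlz : l * (θ' - z) = y - z := by
            rw [hldef]; field_simp
            rw [mul_div_assoc, div_self (ne_of_gt (by linarith : (0:ℝ) < θ' - z)), mul_one]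
          simp only [smul_eq_mul]
          linear_combination hlz
        have hle : F y ≤ l * F θ' := by
          have := hconv.2 (mem_Ici.2 hz) (mem_Ici.2 (by linarith : (0:ℝ) ≤ θ'))
            (by linarith : (0:ℝ) ≤ 1 - l) hl0.le (by ring)
          rw [hcomb, hFz] at this
          simpa using this
        have hFy : 0 < F y := hFpos y hyz
        have h2 : 1 / (l * F θ') ≤ 1 / F y := by
          apply one_div_le_one_div_of_le hFy hle
        have h3 : K * (y - z)⁻¹ = 1 / (l * F θ') := by
          rw [hKdef, hldef]; field_simp
        linarith
      have hint1 : IntervalIntegrable (fun y => K * (y - z)⁻¹) volume x θ' := by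
        apply ContinuousOn.intervalIntegrable
        apply ContinuousOn.mul continuousOn_const
        apply ContinuousOn.inv₀ (by fun_prop)
        intro y hy
        rw [uIcc_of_le hxθ.le] at hy
        have : z < y := lt_of_lt_of_le hxz hy.1
        exact ne_of_gt (by linarith)
      have hmono : (∫ y in x..θ', K * (y - z)⁻¹) ≤ ∫ y in x..θ', 1 / F y := by
        apply intervalIntegral.integral_mono_on hxθ.le hint1 (hIint x θ' hxz hzθ)
        exact hpt
      have hcomp : (∫ y in x..θ', K * (y - z)⁻¹) = K * Real.log ((θ' - z) / (x - z)) := by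
        rw [intervalIntegral.integral_const_mul]
        congr 1
        have : (∫ y in x..θ', (y - z)⁻¹) = ∫ u in x - z..θ' - z, u⁻¹ := by
          exact (intervalIntegral.integral_comp_sub_right (fun u => u⁻¹) z)
        rw [this, integral_inv]
        rw [uIcc_of_le (by linarith)]
        intro hmem
        exact absurd hmem.1 (by linarith)
      have := hΦeq x θ' hxz hxθ.le
      have hnn := hΦnn θ' (by linarith)
      linarith
    have hlog : Tendsto (fun x => K * Real.log ((θ' - z) / (x - z))) (𝓝[>] z) atTop := by
      apply Tendsto.const_mul_atTop hK
      apply Real.tendsto_log_atTop.comp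
      have h1 : Tendsto (fun x : ℝ => x - z) (𝓝[>] z) (𝓝[>] 0) := by
        apply tendsto_nhdsWithin_of_tendsto_nhds_of_eventually_within
        · have h0 : Tendsto (fun x : ℝ => x - z) (𝓝 z) (𝓝 (z - z)) :=
            (continuous_id.sub continuous_const).tendsto z
          rw [sub_self] at h0
          exact h0.mono_left nhdsWithin_le_nhds
        · filter_upwards [self_mem_nhdsWithin] with x hx
          exact sub_pos.2 (show z < x from hx)
      have h2 : Tendsto (fun x : ℝ => (x - z)⁻¹) (𝓝[>] z) atTop :=
        tendsto_inv_nhdsGT_zero.comp h1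
      have h3 : Tendsto (fun x : ℝ => (θ' - z) * (x - z)⁻¹) (𝓝[>] z) atTop :=
        h2.const_mul_atTop (by linarith)
      apply h3.congr
      intro x
      rw [div_eq_mul_inv]
    apply tendsto_atTop_mono' _ _ hlog
    filter_upwards [Ioo_mem_nhdsGT_of_mem ⟨le_rfl, hzθ⟩] with x hx
    exact key x hx
  -- surjectivity of Φ onto (0, ∞)
  have hsurj : ∀ t : ℝ, 0 < t → ∃ x, z < x ∧ Φ x = t := by
    intro t ht
    obtain ⟨b, hbθ, hΦb⟩ : ∃ b, θ' < b ∧ Φ b < t := by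
      have h1 : ∀ᶠ x in atTop, Φ x < t := hΦ0.eventually (tendsto_id.eventually_lt_const ht) |>.mono (fun x hx => hx)
      obtain ⟨b, hb⟩ := (h1.and (eventually_gt_atTop θ')).exists
      exact ⟨b, hb.2, hb.1⟩
    obtain ⟨a, ha⟩ : ∃ a, a ∈ Ioo z b ∧ t < Φ a := by
      have h1 : ∀ᶠ x in 𝓝[>] z, t < Φ x := hΦtop.eventually (eventually_gt_atTop t)
      have h2 : Ioo z b ∈ 𝓝[>] z := Ioo_mem_nhdsGT_of_mem ⟨le_rfl, hzθ.trans hbθ⟩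
      have h3 : ∀ᶠ x in 𝓝[>] z, x ∈ Ioo z b := eventually_of_mem h2 (fun x hx => hx)
      exact ((h1.and h3).exists).imp (fun a h => ⟨h.2, h.1⟩)
    obtain ⟨⟨haz, hab⟩, hta⟩ := ha
    have hΦcont : ContinuousOn Φ (Icc a b) := fun x hx =>
      (hΦcontAt x (lt_of_lt_of_le haz hx.1)).continuousWithinAt
    have := intermediate_value_Icc' hab.le hΦcont
    obtain ⟨x, hx, hΦx⟩ := this ⟨hΦb.le, hta.le⟩
    exact ⟨x, lt_of_lt_of_le haz hx.1, hΦx⟩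
  -- define ψ
  have hch : ∀ t : ℝ, ∃ x : ℝ, 0 < t → z < x ∧ Φ x = t := by
    intro t
    by_cases ht : 0 < t
    · obtain ⟨x, hx⟩ := hsurj t ht
      exact ⟨x, fun _ => hx⟩
    · exact ⟨z + 1, fun h => absurd h ht⟩
  choose ψ hψ using hch
  have hψz : ∀ t : ℝ, 0 < t → z < ψ t := fun t ht => (hψ t ht).1
  have hψΦ : ∀ t : ℝ, 0 < t → Φ (ψ t) = t := fun t ht => (hψ t ht).2
  -- strict antitonicity
  have hψanti' : ∀ s t : ℝ, 0 < s → s < t → ψ t < ψ s := by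
    intro s t hs hst
    rcases lt_trichotomy (ψ t) (ψ s) with h | h | h
    · exact h
    · exfalso
      have := hψΦ s hs
      rw [← h, hψΦ t (hs.trans hst)] at this
      linarith
    · exfalso
      have := hΦstrict (ψ s) (ψ t) (hψz s hs) h
      rw [hψΦ s hs, hψΦ t (hs.trans hst)] at this
      linarith
  have hψanti : AntitoneOn ψ (Ioi 0) := by
    intro s hs t ht hst
    rcases eq_or_lt_of_le hst with rfl | h
    · exact le_rfl
    · exact (hψanti' s t hs h).le
  -- continuity of ψ
  have hψcontAt : ∀ t : ℝ, 0 < t → ContinuousAt ψ t := by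
    intro t ht
    have hx : z < ψ t := hψz t ht
    rw [ContinuousAt]
    rw [Metric.tendsto_nhds]
    intro ε hε
    set x₁ : ℝ := max (ψ t - ε / 2) ((ψ t + z) / 2) with hx₁def
    have hx₁z : z < x₁ := lt_of_lt_of_le (by linarith) (le_max_right _ _)
    have hx₁x : x₁ < ψ t := max_lt (by linarith) (by linarith)
    have hx₁ge : ψ t - ε / 2 ≤ x₁ := le_max_left _ _
    set x₂ : ℝ := ψ t + ε / 2 with hx₂def
    have hxx₂ : ψ t < x₂ := by simp only [hx₂def]; linarith
    have h₁ : t < Φ x₁ := by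
      have := hΦstrict x₁ (ψ t) hx₁z hx₁x
      rwa [hψΦ t ht] at this
    have h₂ : Φ x₂ < t := by
      have := hΦstrict (ψ t) x₂ hx hxx₂
      rwa [hψΦ t ht] at this
    filter_upwards [IsOpen.mem_nhds isOpen_Ioo (⟨h₂, h₁⟩ : t ∈ Ioo (Φ x₂) (Φ x₁))] with s hs
    have hs0 : 0 < s := lt_of_le_of_lt (hΦnn x₂ (le_of_lt (hx.trans hxx₂))) hs.1
    have hl : x₁ < ψ s := by
      by_contra h
      push_neg at h
      have := hΦanti (ψ s) x₁ (hψz s hs0) h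
      rw [hψΦ s hs0] at this
      linarith [hs.2]
    have hr : ψ s < x₂ := by
      by_contra h
      push_neg at h
      have := hΦanti x₂ (ψ s) (hx.trans hxx₂) h
      rw [hψΦ s hs0] at this
      linarith [hs.1]
    rw [Real.dist_eq, abs_sub_lt_iff]
    constructor
    · have : ψ s < ψ t + ε / 2 := hr
      linarith
    · have : ψ t - ε / 2 ≤ x₁ := hx₁ge
      linarith
  have hψcont : ContinuousOn ψ (Ioi 0) := fun t ht => (hψcontAt t ht).continuousWithinAt
  -- blow up at 0+
  have hψtop : Tendsto ψ (𝓝[>] 0) atTop := by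
    rw [tendsto_atTop]
    intro M
    set b : ℝ := max M (z + 1) with hbdef
    have hbz : z < b := lt_of_lt_of_le (by linarith) (le_max_right _ _)
    have hΦbpos : 0 < Φ b := by
      have h1 := hΦstrict b (b + 1) hbz (by linarith)
      have h2 := hΦnn (b + 1) (by linarith)
      linarith
    filter_upwards [Ioo_mem_nhdsGT_of_mem ⟨le_rfl, hΦbpos⟩] with t htmem
    have ht : 0 < t := htmem.1
    have : ψ t > b := by
      by_contra h
      push_neg at h
      have := hΦanti (ψ t) b (hψz t ht) h
      rw [hψΦ t ht] at this
      linarith [htmem.2]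
    exact (le_max_left M (z + 1)).trans this.le
  -- limit at infinity
  have hψinf : Tendsto ψ atTop (𝓝 z) := by
    rw [tendsto_order]
    constructor
    · intro a ha
      filter_upwards [eventually_gt_atTop 0] with t ht
      exact lt_trans ha (hψz t ht)
    · intro a ha
      set x₀ : ℝ := (z + a) / 2 with hx₀def
      have hx₀z : z < x₀ := by simp only [hx₀def]; linarith
      have hx₀a : x₀ < a := by simp only [hx₀def]; linarith
      filter_upwards [eventually_gt_atTop (max (Φ x₀) 0)] with t ht
      have ht0 : 0 < t := lt_of_le_of_lt (le_max_right _ _) ht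
      have htΦ : Φ x₀ < t := lt_of_le_of_lt (le_max_left _ _) ht
      have : ψ t < x₀ := by
        by_contra h
        push_neg at h
        have := hΦanti x₀ (ψ t) hx₀z h
        rw [hψΦ t ht0] at this
        linarith
      exact this.trans hx₀a
  -- derivative of ψ
  have hψderiv : ∀ t : ℝ, 0 < t → HasDerivAt ψ (-F (ψ t)) t := by
    intro t ht
    have hFψ : 0 < F (ψ t) := hFpos _ (hψz t ht)
    have h := HasDerivAt.of_local_left_inverse (hψcontAt t ht)
      (hΦderiv (ψ t) (hψz t ht)) (by simp [ne_of_gt hFψ]) ?_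
    · have heq : (-(1 / F (ψ t)))⁻¹ = -F (ψ t) := by
        field_simp
      rwa [heq] at h
    · filter_upwards [Ioi_mem_nhds ht] with y hy
      exact hψΦ y hy
  -- the integral equation
  have hψeqn : ∀ s t : ℝ, 0 < s → s ≤ t → ψ t - ψ s = ∫ w in s..t, -F (ψ w) := by
    intro s t hs hst
    have h1 : ∀ x ∈ uIcc s t, HasDerivAt ψ (-F (ψ x)) x := by
      rw [uIcc_of_le hst]
      intro x hx
      exact hψderiv x (lt_of_lt_of_le hs hx.1)
    have h2 : IntervalIntegrable (fun w => -F (ψ w)) volume s t := by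
      apply ContinuousOn.intervalIntegrable
      apply ContinuousOn.neg
      apply hcont.comp (hψcont.mono _) _
      · rw [uIcc_of_le hst]
        intro x hx
        exact lt_of_lt_of_le hs hx.1
      · rw [uIcc_of_le hst]
        intro x hx
        exact le_of_lt (lt_of_le_of_lt hz (hψz x (lt_of_lt_of_le hs hx.1)))
    exact (intervalIntegral.integral_eq_sub_of_hasDerivAt h1 h2).symm
  -- minimality
  have hmin : ∀ w : ℝ → ℝ, ContinuousOn w (Ioi 0) → (∀ t : ℝ, 0 < t → 0 ≤ w t) →
      (∀ s t : ℝ, 0 < s → s ≤ t → w t - w s = ∫ x in s..t, -F (w x)) →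
      Tendsto w (𝓝[>] 0) atTop → ∀ t : ℝ, 0 < t → ψ t ≤ w t := by
    intro w hwc hw0 hwe hwl
    -- w is differentiable with derivative -F ∘ w
    have hFw : ContinuousOn (fun x => -F (w x)) (Ioi 0) := by
      apply ContinuousOn.neg
      exact hcont.comp hwc (fun x hx => hw0 x hx)
    have hwderiv : ∀ r : ℝ, 0 < r → HasDerivAt w (-F (w r)) r := by
      intro r hr
      have ha : 0 < r / 2 := half_pos hr
      have heq : w =ᶠ[𝓝 r] fun u => w (r / 2) + ∫ x in (r/2 : ℝ)..u, -F (w x) := by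
        filter_upwards [Ioi_mem_nhds (by linarith : r / 2 < r)] with u hu
        have := hwe (r / 2) u ha (le_of_lt hu)
        linarith
      have hint : IntervalIntegrable (fun x => -F (w x)) volume (r / 2) r := by
        apply ContinuousOn.intervalIntegrable
        apply hFw.mono
        rw [uIcc_of_le (by linarith : r / 2 ≤ r)]
        intro x hx
        exact lt_of_lt_of_le ha hx.1
      have hd : HasDerivAt (fun u => w (r / 2) + ∫ x in (r/2 : ℝ)..u, -F (w x)) (-F (w r)) r := by
        exact (intervalIntegral.integral_hasDerivAt_right hint
          (hFw.stronglyMeasurableAtFilter isOpen_Ioi r hr)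
          (hFw.continuousAt (isOpen_Ioi.mem_nhds hr))).const_add (w (r / 2))
      exact hd.congr_of_eventuallyEq heq
    -- key identity: as long as w stays above z, Φ (w t) = t
    have key : ∀ t : ℝ, 0 < t → (∀ r : ℝ, 0 < r → r ≤ t → z < w r) → Φ (w t) = t := by
      intro t ht hwz
      have hFTC : ∀ s' : ℝ, s' ∈ Ioo 0 t → Φ (w t) = Φ (w s') + (t - s') := by
        intro s' hs'
        have hg : ∀ x ∈ uIcc s' t, HasDerivAt (fun u => Φ (w u)) 1 x := by
          rw [uIcc_of_le (le_of_lt hs'.2)]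
          intro x hx
          have hx0 : 0 < x := lt_of_lt_of_le hs'.1 hx.1
          have hwx : z < w x := hwz x hx0 hx.2
          have hFwx : 0 < F (w x) := hFpos _ hwx
          have hcomp := HasDerivAt.comp x (hΦderiv (w x) hwx) (hwderiv x hx0)
          have harith : -(1 / F (w x)) * -F (w x) = 1 := by
            field_simp
          rw [harith] at hcomp
          exact hcomp
        have := intervalIntegral.integral_eq_sub_of_hasDerivAt hg
          intervalIntegrable_const
        rw [intervalIntegral.integral_const, smul_eq_mul, mul_one] at this
        have h2 : Φ (w t) - Φ (w s') = t - s' := by rw [← this]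
        linarith
      have hq1 : Tendsto (fun s' => Φ (w s') + (t - s')) (𝓝[>] 0) (𝓝 (0 + (t - 0))) := by
        apply Tendsto.add
        · exact hΦ0.comp hwl
        · exact (tendsto_const_nhds.sub (tendsto_id.mono_left nhdsWithin_le_nhds))
      rw [zero_add, sub_zero] at hq1
      have hq2 : (fun s' => Φ (w s') + (t - s')) =ᶠ[𝓝[>] (0:ℝ)] fun _ => Φ (w t) := by
        filter_upwards [Ioo_mem_nhdsGT_of_mem ⟨le_rfl, ht⟩] with s' hs'
        exact (hFTC s' hs').symm
      have hq3 : Tendsto (fun _ : ℝ => Φ (w t)) (𝓝[>] (0:ℝ)) (𝓝 t) := hq1.congr' hq2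
      exact tendsto_nhds_unique tendsto_const_nhds hq3
    -- w never reaches z
    have hwz : ∀ t : ℝ, 0 < t → z < w t := by
      by_contra hcon
      push_neg at hcon
      obtain ⟨t₀, ht₀, hwt₀⟩ := hcon
      obtain ⟨δ, hδpos, hδ⟩ : ∃ δ, 0 < δ ∧ ∀ s ∈ Ioo (0:ℝ) δ, z + 1 ≤ w s := by
        have h1 : ∀ᶠ s in 𝓝[>] (0:ℝ), z + 1 ≤ w s := hwl.eventually (eventually_ge_atTop (z + 1))
        rw [Filter.eventually_iff, mem_nhdsGT_iff_exists_Ioo_subset] at h1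
        obtain ⟨u, hu, hsub⟩ := h1
        exact ⟨u, hu, fun s hs => hsub hs⟩
      have ht₀δ : δ ≤ t₀ := by
        by_contra h
        push_neg at h
        have := hδ t₀ ⟨ht₀, h⟩
        linarith
      set B : Set ℝ := {s | s ∈ Icc (δ / 2) t₀ ∧ w s ∈ Iic z} with hBdef
      have hBne : B.Nonempty := ⟨t₀, ⟨by linarith, le_rfl⟩, hwt₀⟩
      have hBbdd : BddBelow B := ⟨δ / 2, fun s hs => hs.1.1⟩
      have hBclosed : IsClosed B := by
        apply ContinuousOn.preimage_isClosed_of_isClosed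
          (hwc.mono (fun x hx => lt_of_lt_of_le (by linarith) hx.1)) isClosed_Icc isClosed_Iic
      set τ : ℝ := sInf B with hτdef
      have hτB : τ ∈ B := hBclosed.csInf_mem hBne hBbdd
      have hτpos : 0 < τ := lt_of_lt_of_le (by linarith) hτB.1.1
      have hτδ : δ ≤ τ := by
        by_contra h
        push_neg at h
        have := hδ τ ⟨hτpos, h⟩
        have := hτB.2
        simp only [mem_Iic] at this
        linarith
      have hwτ : w τ ≤ z := hτB.2
      -- on (0, τ), w stays above z
      have habove : ∀ r : ℝ, 0 < r → r < τ → z < w r := by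
        intro r hr hrτ
        rcases lt_or_ge r δ with h | h
        · have := hδ r ⟨hr, h⟩; linarith
        · by_contra hcon2
          push_neg at hcon2
          have hrB : r ∈ B := ⟨⟨by linarith, le_trans hrτ.le hτB.1.2⟩, hcon2⟩
          have := csInf_le hBbdd hrB
          rw [← hτdef] at this
          linarith
      -- Φ(w s') = s' for s' ∈ (0, τ)
      have hids : ∀ s' : ℝ, s' ∈ Ioo 0 τ → Φ (w s') = s' := by
        intro s' hs'
        exact key s' hs'.1 (fun r hr hrs' => habove r hr (lt_of_le_of_lt hrs' hs'.2))
      -- w τ = z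
      have hwτz : w τ = z := by
        have hge : z ≤ w τ := by
          have hcont_w : Tendsto w (𝓝[<] τ) (𝓝 (w τ)) :=
            ((hwc.continuousAt (isOpen_Ioi.mem_nhds hτpos)).tendsto).mono_left nhdsWithin_le_nhds
          apply ge_of_tendsto hcont_w
          filter_upwards [Ioo_mem_nhdsLT_of_mem ⟨half_lt_self hτpos, le_rfl⟩] with r hr
          have : 0 < r := lt_trans (half_pos hτpos) hr.1
          exact (habove r this hr.2).le
        linarith
      -- contradiction via blow-up of Φ at z+
      have hwin : Tendsto w (𝓝[<] τ) (𝓝[>] z) := by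
        apply tendsto_nhdsWithin_of_tendsto_nhds_of_eventually_within
        · have := (hwc.continuousAt (isOpen_Ioi.mem_nhds hτpos)).tendsto
          rw [hwτz] at this
          exact this.mono_left nhdsWithin_le_nhds
        · filter_upwards [Ioo_mem_nhdsLT_of_mem ⟨half_lt_self hτpos, le_rfl⟩] with r hr
          exact habove r (lt_trans (half_pos hτpos) hr.1) hr.2
      have h1 : Tendsto (fun s' => Φ (w s')) (𝓝[<] τ) atTop := hΦtop.comp hwin
      have h2 : Tendsto (fun s' => Φ (w s')) (𝓝[<] τ) (𝓝 τ) := by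
        apply Tendsto.congr' _ (tendsto_id.mono_left nhdsWithin_le_nhds)
        filter_upwards [Ioo_mem_nhdsLT_of_mem ⟨half_lt_self hτpos, le_rfl⟩] with r hr
        exact (hids r ⟨lt_trans (half_pos hτpos) hr.1, hr.2⟩).symm
      exact not_tendsto_nhds_of_tendsto_atTop h1 τ h2
    -- conclude minimality (in fact equality)
    intro t ht
    have hΦwt : Φ (w t) = t := key t ht (fun r hr _ => hwz r hr)
    have : w t = ψ t := by
      rcases lt_trichotomy (w t) (ψ t) with h | h | h
      · exfalso
        have := hΦstrict (w t) (ψ t) (hwz t ht) h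
        rw [hΦwt, hψΦ t ht] at this
        linarith
      · exact h
      · exfalso
        have := hΦstrict (ψ t) (w t) (hψz t ht) h
        rw [hΦwt, hψΦ t ht] at this
        linarith
    linarith [this.ge]
  exact ⟨ψ, hψcont, hψanti, hψz, hψeqn, hψtop, hψinf, hmin⟩

/-- Assume `σ₂₂ > 0` and `A ⊆ ℝ × [v,∞)` for some `v > 0`,
so `c = ν̂(A) < ∞`.  With `G₀^A(x) = G₀(x) - ∫_A (exp(-x u₂) - 1) ν̂(du)`:
(i) `G₀^A` is convex on `[0,∞)` with `G₀^A(0) = 0`, `x ↦ G₀^A(x) - c` is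
convex with value `-c ≤ 0` at `0` and satisfies Grey's condition; (ii) the
minimal continuous nonincreasing solution `ψ̄ : (0,∞) → (0,∞)` of
`ψ̄' = c - G₀^A(ψ̄)` with `ψ̄(0+) = ∞` exists and
`lim_{t→∞} ψ̄(t) = inf{x ≥ 0 : G₀^A(x) > c}`. -/
theorem stmt_16
    (b2 σ22 : ℝ) (hσpos : 0 < σ22) (ν : Measure (ℝ × ℝ))
    (hsupp : ν {u | u.2 < 0} = 0)
    (hint : Integrable (fun u : ℝ × ℝ => min u.2 (u.2 ^ 2)) ν)
    (G0 : ℝ → ℝ)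
    (hG0 : ∀ x, G0 x
      = b2 * x + σ22 * x ^ 2
        + ∫ u : ℝ × ℝ, (Real.exp (-x * u.2) - 1 + x * u.2) ∂ν)
    (A : Set (ℝ × ℝ)) (hA : MeasurableSet A)
    (v : ℝ) (hv : 0 < v) (hAsub : A ⊆ {u | v ≤ u.2})
    (GA : ℝ → ℝ)
    (hGA : ∀ x, GA x = G0 x - ∫ u in A, (Real.exp (-x * u.2) - 1) ∂ν)
    (c : ℝ) (hc : c = (ν A).toReal) :
    ν A ≠ ⊤ ∧
    ConvexOn ℝ (Set.Ici 0) GA ∧ GA 0 = 0 ∧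
    ConvexOn ℝ (Set.Ici 0) (fun x => GA x - c) ∧ GA 0 - c ≤ 0 ∧
    (∃ θ : ℝ, 0 < θ ∧ 0 < GA θ - c ∧
      IntegrableOn (fun x => 1 / (GA x - c)) (Set.Ici θ)) ∧
    ∃ ψ : ℝ → ℝ,
      ContinuousOn ψ (Set.Ioi 0) ∧
      AntitoneOn ψ (Set.Ioi 0) ∧
      (∀ t : ℝ, 0 < t → 0 < ψ t) ∧
      (∀ s t : ℝ, 0 < s → s ≤ t → ψ t - ψ s = ∫ w in s..t, (c - GA (ψ w))) ∧
      Filter.Tendsto ψ (nhdsWithin 0 (Set.Ioi 0)) Filter.atTop ∧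
      Filter.Tendsto ψ Filter.atTop (nhds (sInf {x : ℝ | 0 ≤ x ∧ c < GA x})) ∧
      (∀ w : ℝ → ℝ, ContinuousOn w (Set.Ioi 0) →
        (∀ t : ℝ, 0 < t → 0 ≤ w t) →
        (∀ s t : ℝ, 0 < s → s ≤ t → w t - w s = ∫ x in s..t, (c - GA (w x))) →
        Filter.Tendsto w (nhdsWithin 0 (Set.Ioi 0)) Filter.atTop →
        ∀ t : ℝ, 0 < t → ψ t ≤ w t) := by
  -- a.e. nonnegativity of u.2
  have hae : ∀ᵐ u ∂ν, 0 ≤ u.2 := by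
    rw [ae_iff]
    convert hsupp using 2
    ext u
    simp [not_le]
  -- finiteness of ν A
  have hνA : ν A ≠ ⊤ := by
    set m : ℝ := min v (v ^ 2) with hm
    have hmpos : 0 < m := lt_min hv (by positivity)
    have hsub : A ⊆ {u : ℝ × ℝ | m ≤ min u.2 (u.2 ^ 2)} := by
      intro u hu
      have h1 : v ≤ u.2 := hAsub hu
      have h2 : v ^ 2 ≤ u.2 ^ 2 := by nlinarith
      exact le_min ((min_le_left _ _).trans h1) ((min_le_right _ _).trans h2) |>.trans (le_min (min_le_left _ _) (min_le_right _ _))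
    have := hint.measure_ge_lt_top hmpos
    exact ((measure_mono hsub).trans_lt this).ne
  -- integrability of the Lévy integrand
  have hexpineq : ∀ y : ℝ, 0 ≤ y → Real.exp (-y) - 1 + y ≤ min y (y ^ 2) := by
    intro y hy
    have h1 : Real.exp (-y) - 1 + y ≤ y := by
      have := Real.exp_le_one_iff.2 (neg_nonpos.2 hy)
      linarith
    have h2 : Real.exp (-y) - 1 + y ≤ y ^ 2 := by
      rcases le_total y 1 with h | h
      · have habs : |(-y)| ≤ 1 := by rw [abs_neg, abs_of_nonneg hy]; exact h
        have := Real.abs_exp_sub_one_sub_id_le habs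
        have h3 := (abs_le.1 this).2
        calc Real.exp (-y) - 1 + y = Real.exp (-y) - 1 - (-y) := by ring
        _ ≤ (-y) ^ 2 := h3
        _ = y ^ 2 := by ring
      · nlinarith
    exact le_min h1 h2
  have hexpnn : ∀ y : ℝ, 0 ≤ y → 0 ≤ Real.exp (-y) - 1 + y := by
    intro y hy
    have := Real.add_one_le_exp (-y)
    linarith
  have hk1int : ∀ x : ℝ, 0 ≤ x →
      Integrable (fun u : ℝ × ℝ => Real.exp (-x * u.2) - 1 + x * u.2) ν := by
    intro x hx
    apply Integrable.mono' ((hint.abs).const_mul (max x (x ^ 2)))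
    · apply Continuous.aestronglyMeasurable
      fun_prop
    · filter_upwards [hae] with u hu
      have ht : 0 ≤ x * u.2 := mul_nonneg hx hu
      rw [Real.norm_of_nonneg (by simpa using hexpnn (x * u.2) ht)]
      have h1 := hexpineq (x * u.2) ht
      have habs : |min u.2 (u.2 ^ 2)| = min u.2 (u.2 ^ 2) :=
        abs_of_nonneg (le_min hu (by positivity))
      rw [habs]
      rw [show -x * u.2 = -(x * u.2) by ring]
      have hM1 : x ≤ max x (x ^ 2) := le_max_left _ _
      have hM2 : x ^ 2 ≤ max x (x ^ 2) := le_max_right _ _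
      rcases le_total u.2 (u.2 ^ 2) with h | h
      · rw [min_eq_left h]
        calc Real.exp (-(x * u.2)) - 1 + x * u.2 ≤ x * u.2 := by
              have := hexpineq (x * u.2) ht; have := min_le_left (x * u.2) ((x * u.2) ^ 2); linarith [le_min_iff.1 h1]
        _ ≤ max x (x ^ 2) * u.2 := mul_le_mul_of_nonneg_right hM1 hu
      · rw [min_eq_right h]
        calc Real.exp (-(x * u.2)) - 1 + x * u.2 ≤ (x * u.2) ^ 2 := by
              linarith [le_min_iff.1 h1]
        _ = x ^ 2 * u.2 ^ 2 := by ring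
        _ ≤ max x (x ^ 2) * u.2 ^ 2 := mul_le_mul_of_nonneg_right hM2 (by positivity)
  have hk2int : ∀ x : ℝ, 0 ≤ x →
      IntegrableOn (fun u : ℝ × ℝ => Real.exp (-x * u.2) - 1) A ν := by
    intro x hx
    apply Measure.integrableOn_of_bounded (M := 1) hνA
    · apply Continuous.aestronglyMeasurable
      fun_prop
    · filter_upwards [ae_restrict_of_ae hae] with u hu
      have h1 : Real.exp (-x * u.2) ≤ 1 := by
        rw [Real.exp_le_one_iff]
        simp only [neg_mul, neg_nonpos]
        exact mul_nonneg hx hu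
      have h2 : 0 < Real.exp (-x * u.2) := Real.exp_pos _
      rw [Real.norm_eq_abs, abs_le]
      constructor <;> linarith
  -- GA 0 = 0
  have hGA0 : GA 0 = 0 := by
    rw [hGA, hG0]
    simp
  -- rewrite GA as a single integral plus polynomial
  have hrw : ∀ x : ℝ, 0 ≤ x → GA x = b2 * x + σ22 * x ^ 2
      + ∫ u : ℝ × ℝ, (Real.exp (-x * u.2) - 1 + x * u.2
          - A.indicator (fun u : ℝ × ℝ => Real.exp (-x * u.2) - 1) u) ∂ν := by
    intro x hx
    rw [hGA, hG0]
    rw [integral_sub (hk1int x hx) ((integrable_indicator_iff hA).2 (hk2int x hx))]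
    rw [integral_indicator hA]
    ring
  have hindint : ∀ x : ℝ, 0 ≤ x →
      Integrable (fun u : ℝ × ℝ => Real.exp (-x * u.2) - 1 + x * u.2
          - A.indicator (fun u : ℝ × ℝ => Real.exp (-x * u.2) - 1) u) ν := by
    intro x hx
    exact (hk1int x hx).sub ((integrable_indicator_iff hA).2 (hk2int x hx))
  -- convexity of GA on [0, ∞)
  have hGAconv : ConvexOn ℝ (Ici 0) GA := by
    refine ⟨convex_Ici 0, ?_⟩
    intro x hx y hy a b ha hb hab
    simp only [smul_eq_mul] at *
    have hq : (0:ℝ) ≤ a * x + b * y := by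
      have := mul_nonneg ha (mem_Ici.1 hx)
      have := mul_nonneg hb (mem_Ici.1 hy)
      linarith
    rw [hrw _ hq, hrw _ (mem_Ici.1 hx), hrw _ (mem_Ici.1 hy)]
    have hintmono : (∫ u : ℝ × ℝ, (Real.exp (-(a * x + b * y) * u.2) - 1 + (a * x + b * y) * u.2
          - A.indicator (fun u : ℝ × ℝ => Real.exp (-(a * x + b * y) * u.2) - 1) u) ∂ν)
        ≤ ∫ u : ℝ × ℝ, (a * (Real.exp (-x * u.2) - 1 + x * u.2
            - A.indicator (fun u : ℝ × ℝ => Real.exp (-x * u.2) - 1) u)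
          + b * (Real.exp (-y * u.2) - 1 + y * u.2
            - A.indicator (fun u : ℝ × ℝ => Real.exp (-y * u.2) - 1) u)) ∂ν := by
      apply integral_mono (hindint _ hq)
        (((hindint x (mem_Ici.1 hx)).const_mul a).add ((hindint y (mem_Ici.1 hy)).const_mul b))
      intro u
      simp only [Pi.add_apply]
      have hexp : Real.exp (-(a * x + b * y) * u.2)
          ≤ a * Real.exp (-x * u.2) + b * Real.exp (-y * u.2) := by
        have := convexOn_exp.2 (mem_univ (-x * u.2)) (mem_univ (-y * u.2)) ha hb hab
        simp only [smul_eq_mul] at this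
        calc Real.exp (-(a * x + b * y) * u.2) = Real.exp (a * (-x * u.2) + b * (-y * u.2)) := by
              ring_nf
        _ ≤ a * Real.exp (-x * u.2) + b * Real.exp (-y * u.2) := this
      by_cases hu : u ∈ A
      · simp only [indicator_of_mem hu]
        apply le_of_eq
        ring
      · simp only [indicator_of_notMem hu]
        nlinarith [hexp]
    have hsplit : (∫ u : ℝ × ℝ, (a * (Real.exp (-x * u.2) - 1 + x * u.2
            - A.indicator (fun u : ℝ × ℝ => Real.exp (-x * u.2) - 1) u)
          + b * (Real.exp (-y * u.2) - 1 + y * u.2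
            - A.indicator (fun u : ℝ × ℝ => Real.exp (-y * u.2) - 1) u)) ∂ν)
        = a * (∫ u : ℝ × ℝ, (Real.exp (-x * u.2) - 1 + x * u.2
            - A.indicator (fun u : ℝ × ℝ => Real.exp (-x * u.2) - 1) u) ∂ν)
          + b * (∫ u : ℝ × ℝ, (Real.exp (-y * u.2) - 1 + y * u.2
            - A.indicator (fun u : ℝ × ℝ => Real.exp (-y * u.2) - 1) u) ∂ν) := by
      rw [integral_add ((hindint x (mem_Ici.1 hx)).const_mul a)
        ((hindint y (mem_Ici.1 hy)).const_mul b),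
        integral_const_mul, integral_const_mul]
    rw [hsplit] at hintmono
    have hb' : b = 1 - a := by linarith
    subst hb'
    have hH : 0 ≤ σ22 * (a * (1 - a) * (x - y) ^ 2) :=
      mul_nonneg hσpos.le (mul_nonneg (mul_nonneg ha hb) (sq_nonneg (x - y)))
    nlinarith [hintmono, hH]
  -- lower bound
  have hlb : ∀ x : ℝ, 0 ≤ x → b2 * x + σ22 * x ^ 2 ≤ GA x := by
    intro x hx
    rw [hrw x hx]
    have : 0 ≤ ∫ u : ℝ × ℝ, (Real.exp (-x * u.2) - 1 + x * u.2
        - A.indicator (fun u : ℝ × ℝ => Real.exp (-x * u.2) - 1) u) ∂ν := by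
      apply integral_nonneg_of_ae
      filter_upwards [hae] with u hu
      simp only [Pi.zero_apply]
      have h1 : 0 ≤ Real.exp (-x * u.2) - 1 + x * u.2 := by
        have := hexpnn (x * u.2) (mul_nonneg hx hu)
        rw [show -x * u.2 = -(x * u.2) by ring]
        linarith
      have h2 : A.indicator (fun u : ℝ × ℝ => Real.exp (-x * u.2) - 1) u ≤ 0 := by
        by_cases hmem : u ∈ A
        · simp only [indicator_of_mem hmem]
          have : Real.exp (-x * u.2) ≤ 1 := by
            rw [Real.exp_le_one_iff]
            simp only [neg_mul, neg_nonpos]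
            exact mul_nonneg hx hu
          linarith
        · simp [indicator_of_notMem hmem]
      linarith
    linarith
  -- continuity of GA on [0, ∞)
  have hGAcont : ContinuousOn GA (Ici 0) := by
    intro x hx
    rcases eq_or_lt_of_le (mem_Ici.1 hx) with h | h
    · -- continuity at 0 by squeezing
      subst h
      rw [ContinuousWithinAt, hGA0]
      have hlow : Tendsto (fun x : ℝ => b2 * x + σ22 * x ^ 2) (𝓝[Ici 0] (0:ℝ)) (𝓝 0) := by
        have hcp : Continuous (fun x : ℝ => b2 * x + σ22 * x ^ 2) := by fun_prop
        have : Tendsto (fun x : ℝ => b2 * x + σ22 * x ^ 2) (𝓝 (0:ℝ))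
            (𝓝 (b2 * 0 + σ22 * 0 ^ 2)) := hcp.tendsto 0
        have h0 : b2 * 0 + σ22 * 0 ^ 2 = 0 := by norm_num
        rw [h0] at this
        exact this.mono_left nhdsWithin_le_nhds
      have hupp : Tendsto (fun x : ℝ => x * GA 1) (𝓝[Ici 0] (0:ℝ)) (𝓝 0) := by
        have hcp : Continuous (fun x : ℝ => x * GA 1) := by fun_prop
        have : Tendsto (fun x : ℝ => x * GA 1) (𝓝 (0:ℝ)) (𝓝 (0 * GA 1)) := hcp.tendsto 0
        rw [zero_mul] at this
        exact this.mono_left nhdsWithin_le_nhds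
      apply tendsto_of_tendsto_of_tendsto_of_le_of_le' hlow hupp
      · filter_upwards [self_mem_nhdsWithin] with x hx
        exact hlb x hx
      · have hIic : Iic (1:ℝ) ∈ 𝓝[Ici 0] (0:ℝ) :=
          mem_nhdsWithin_of_mem_nhds (Iic_mem_nhds (by norm_num))
        filter_upwards [self_mem_nhdsWithin, hIic] with x hx1 hx2
        have := hGAconv.2 (mem_Ici.2 le_rfl) (mem_Ici.2 (by norm_num : (0:ℝ) ≤ 1))
          (by linarith [mem_Iic.1 hx2] : (0:ℝ) ≤ 1 - x) (mem_Ici.1 hx1) (by ring)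
        simp only [smul_eq_mul, mul_zero, mul_one, zero_add, hGA0] at this
        linarith
    · -- interior point
      have hopen : ContinuousOn GA (Ioi 0) :=
        (hGAconv.subset Ioi_subset_Ici_self (convex_Ioi 0)).continuousOn isOpen_Ioi
      exact ((hopen.continuousAt (isOpen_Ioi.mem_nhds h)).continuousWithinAt)
  -- c is nonnegative
  have hc0 : 0 ≤ c := hc ▸ ENNReal.toReal_nonneg
  -- Grey's condition
  set θ : ℝ := max 1 (2 * (|b2| + c + 1) / σ22) with hθdef
  have hθ1 : 1 ≤ θ := le_max_left _ _
  have hθpos : 0 < θ := by linarith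
  have hθ2 : 2 * (|b2| + c + 1) / σ22 ≤ θ := le_max_right _ _
  have hkey : ∀ x : ℝ, θ ≤ x → σ22 / 2 * x ^ 2 + 1 ≤ GA x - c := by
    intro x hx
    have hx1 : 1 ≤ x := hθ1.trans hx
    have hge := hlb x (by linarith)
    have h2 : 2 * (|b2| + c + 1) / σ22 ≤ x := hθ2.trans hx
    have h3 : 2 * (|b2| + c + 1) ≤ σ22 * x := by
      rw [div_le_iff₀ hσpos] at h2; linarith
    have habs : -b2 ≤ |b2| := neg_le_abs b2
    have p1 : 2 * (|b2| + c + 1) * x ≤ σ22 * x * x :=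
      mul_le_mul_of_nonneg_right h3 (by linarith)
    have p2 : 0 ≤ (|b2| + b2) * x := mul_nonneg (by linarith [neg_le_abs b2]) (by linarith)
    have p3 : 0 ≤ (c + 1) * (x - 1) := mul_nonneg (by linarith) (by linarith)
    nlinarith [hge, p1, p2, p3]
  have hθGA : 0 < GA θ - c := by nlinarith [hkey θ le_rfl, sq_nonneg θ]
  have hGrey : IntegrableOn (fun x => 1 / (GA x - c)) (Ici θ) := by
    rw [integrableOn_Ici_iff_integrableOn_Ioi]
    have hpos : ∀ x : ℝ, x ∈ Ioi θ → 0 < GA x - c := by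
      intro x hx
      have := hkey x (le_of_lt hx)
      nlinarith [sq_nonneg x]
    apply Integrable.mono'
      ((integrableOn_Ioi_rpow_of_lt (by norm_num : (-2:ℝ) < -1) hθpos).const_mul (2 / σ22))
    · apply ContinuousOn.aestronglyMeasurable _ measurableSet_Ioi
      apply ContinuousOn.div continuousOn_const
      · apply ContinuousOn.sub (hGAcont.mono _) continuousOn_const
        intro x hx
        exact le_of_lt (lt_trans hθpos hx)
      · intro x hx
        exact ne_of_gt (hpos x hx)
    · filter_upwards [ae_restrict_mem measurableSet_Ioi] with x hx
      have hxθ : θ ≤ x := le_of_lt hx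
      have h1 := hkey x hxθ
      have hxpos : 0 < x := lt_trans hθpos hx
      have hGApos : 0 < GA x - c := hpos x hx
      rw [Real.norm_eq_abs, abs_of_pos (by positivity : (0:ℝ) < 1 / (GA x - c))]
      have hx2 : x ^ (-2 : ℝ) = (x ^ 2)⁻¹ := by
        rw [show ((-2):ℝ) = -((2:ℕ):ℝ) by norm_num, Real.rpow_neg hxpos.le, Real.rpow_natCast]
      rw [hx2]
      have h3 : 0 < σ22 / 2 * x ^ 2 := by positivity
      calc 1 / (GA x - c) ≤ 1 / (σ22 / 2 * x ^ 2) :=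
            one_div_le_one_div_of_le h3 (by linarith)
      _ = 2 / σ22 * (x ^ 2)⁻¹ := by
            field_simp
  -- the set S and its infimum z
  have hSne : {x : ℝ | 0 ≤ x ∧ c < GA x}.Nonempty := ⟨θ, by linarith, by linarith⟩
  have hSbdd : BddBelow {x : ℝ | 0 ≤ x ∧ c < GA x} := ⟨0, fun y hy => hy.1⟩
  set z : ℝ := sInf {x : ℝ | 0 ≤ x ∧ c < GA x} with hzdef
  have hz0 : 0 ≤ z := le_csInf hSne (fun y hy => hy.1)
  have hzθle : z ≤ θ := csInf_le hSbdd ⟨by linarith, by linarith⟩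
  -- properties of F = GA - c
  have hFcont : ContinuousOn (fun x => GA x - c) (Ici 0) := hGAcont.sub continuousOn_const
  have hFconv : ConvexOn ℝ (Ici 0) (fun x => GA x - c) := by
    refine ⟨convex_Ici 0, ?_⟩
    intro x hx y hy a b ha hb hab
    have := hGAconv.2 hx hy ha hb hab
    simp only [smul_eq_mul] at *
    nlinarith [this, hab]
  have hFz_le : GA z - c ≤ 0 := by
    rcases eq_or_lt_of_le hz0 with h | h
    · rw [← h, hGA0]; linarith
    · by_contra hpos
      push_neg at hpos
      have hat : ContinuousAt (fun x => GA x - c) z := hFcont.continuousAt (Ici_mem_nhds h)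
      have hev : (fun x => GA x - c) ⁻¹' (Ioi 0) ∈ 𝓝 z := hat.preimage_mem_nhds (Ioi_mem_nhds hpos)
      have hmem : ((fun x => GA x - c) ⁻¹' (Ioi 0) ∩ Ioi 0) ∩ Iio z ∈ 𝓝[<] z := by
        apply inter_mem _ self_mem_nhdsWithin
        exact nhdsWithin_le_nhds (inter_mem hev (Ioi_mem_nhds h))
      obtain ⟨y, ⟨⟨hyF, hy0⟩, hylt⟩⟩ := Filter.nonempty_of_mem hmem
      have hyS : y ∈ {x : ℝ | 0 ≤ x ∧ c < GA x} := by
        refine ⟨le_of_lt hy0, ?_⟩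
        have : (0:ℝ) < GA y - c := hyF
        linarith
      have := csInf_le hSbdd hyS
      rw [← hzdef] at this
      exact absurd this (not_le.2 hylt)
  have hFz_ge : 0 ≤ GA z - c := by
    have hcl : z ∈ closure {x : ℝ | 0 ≤ x ∧ c < GA x} := by
      rw [hzdef]; exact csInf_mem_closure hSne hSbdd
    have hcw : ContinuousWithinAt (fun x => GA x - c) {x : ℝ | 0 ≤ x ∧ c < GA x} z :=
      (hFcont z (mem_Ici.2 hz0)).mono (fun y hy => hy.1)
    have himg := hcw.mem_closure_image hcl
    have hsub : (fun x => GA x - c) '' {x : ℝ | 0 ≤ x ∧ c < GA x} ⊆ Ici 0 := by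
      rintro _ ⟨y, hy, rfl⟩
      simp only [mem_Ici]
      linarith [hy.2]
    have h2 : GA z - c ∈ closure (Ici (0:ℝ)) := closure_mono hsub himg
    rwa [IsClosed.closure_eq isClosed_Ici] at h2
  have hFz : GA z - c = 0 := le_antisymm hFz_le hFz_ge
  have hFpos : ∀ x : ℝ, z < x → 0 < GA x - c := by
    intro x hx
    have hx' := hx
    rw [hzdef] at hx'
    obtain ⟨y, hyS, hyx⟩ := (csInf_lt_iff hSbdd hSne).1 hx'
    have hFy : (0:ℝ) < GA y - c := by linarith [hyS.2]
    have hyz : z ≤ y := by rw [hzdef]; exact csInf_le hSbdd hyS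
    rcases eq_or_lt_of_le hyz with rfl | hyz'
    · linarith [hFz]
    · have hden : (0:ℝ) < x - z := by linarith
      have ha : 0 ≤ (x - y) / (x - z) := div_nonneg (by linarith) hden.le
      have hb : 0 ≤ (y - z) / (x - z) := div_nonneg (by linarith) hden.le
      have hab : (x - y) / (x - z) + (y - z) / (x - z) = 1 := by
        rw [← add_div, div_eq_one_iff_eq hden.ne']; ring
      have hkey2 := hFconv.2 (mem_Ici.2 hz0) (mem_Ici.2 (hz0.trans hx.le)) ha hb hab
      have hcomb : ((x - y) / (x - z)) • z + ((y - z) / (x - z)) • x = y := by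
        simp only [smul_eq_mul]
        rw [div_mul_eq_mul_div, div_mul_eq_mul_div, ← add_div, div_eq_iff hden.ne']
        ring
      rw [hcomb] at hkey2
      simp only [hFz, smul_eq_mul, mul_zero, zero_add] at hkey2
      by_contra hFx
      push_neg at hFx
      have : (y - z) / (x - z) * (GA x - c) ≤ 0 := mul_nonpos_of_nonneg_of_nonpos hb hFx
      linarith
  have hzθ : z < θ := by
    rcases eq_or_lt_of_le hzθle with h | h
    · rw [h] at hFz; linarith
    · exact h
  -- apply the ODE package
  obtain ⟨ψ, hψcont, hψanti, hψz, hψeqn, hψtop, hψinf, hψmin⟩ :=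
    ode_package (fun x => GA x - c) z θ hz0 hzθ hFcont hFconv hFz hFpos hGrey
  have heqint : ∀ (f : ℝ → ℝ) (s t : ℝ),
      (∫ w in s..t, (c - GA (f w))) = ∫ w in s..t, -(GA (f w) - c) :=
    fun f s t => intervalIntegral.integral_congr (fun w _ => by ring)
  refine ⟨hνA, hGAconv, hGA0, hFconv, by rw [hGA0]; linarith, ⟨θ, hθpos, hθGA, hGrey⟩,
    ψ, hψcont, hψanti, fun t ht => lt_of_le_of_lt hz0 (hψz t ht), ?_, hψtop, hψinf, ?_⟩
  · intro s t hs hst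
    rw [heqint ψ s t]
    exact hψeqn s t hs hst
  · intro w hwcont hw0 hweq hwlim t ht
    apply hψmin w hwcont hw0 _ hwlim t ht
    intro s t' hs hst
    have := hweq s t' hs hst
    rwa [heqint w s t'] at this
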